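/- arXiv:1211.4204 — 3 statements merged into one kernel-verified Lean document; each statement's English description precedes it below -/
import Mathlib

section
/- Let R be a commutative noetherian ring and let S be a Serre class of R-modules. Then S contains a nonzero R-module if and only if there exists a maximal ideal m of R such that the R-module R/m belongs to S. -/
universe u

open CategoryTheory

/-- A Serre class of `R`-modules: a class of `R`-modules closed under isomorphisms,
submodules, quotient modules, and extensions. Closure under isomorphisms follows from
closure under submodules (via injective maps). -/
structure SerreClass (R : Type u) [CommRing R] : Type (u + 1) where
  /-- membership predicate -/
  Mem : ∀ (M : Type u) [AddCommGroup M] [Module R M], Prop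
  /-- closed under submodules (hence under isomorphisms) -/
  mem_of_injective :
    ∀ {M N : Type u} [AddCommGroup M] [Module R M] [AddCommGroup N] [Module R N]
      (f : M →ₗ[R] N), Function.Injective f → Mem N → Mem M
  /-- closed under quotient modules (hence under isomorphisms) -/
  mem_of_surjective :
    ∀ {M N : Type u} [AddCommGroup M] [Module R M] [AddCommGroup N] [Module R N]
      (f : M →ₗ[R] N), Function.Surjective f → Mem M → Mem N
  /-- closed under extensions -/
  mem_of_extension :
    ∀ {M : Type u} [AddCommGroup M] [Module R M] (N : Submodule R M),
      Mem N → Mem (M ⧸ N) → Mem M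

/-- Let `R` be a commutative noetherian ring and let `S` be a Serre class of `R`-modules.
Then `S` contains a nonzero `R`-module if and only if there exists a maximal ideal `m` of `R`
such that the `R`-module `R/m` belongs to `S`. -/
theorem stmt0 (R : Type u) [CommRing R] [IsNoetherianRing R] (S : SerreClass R) :
    (∃ (M : Type u) (_ : AddCommGroup M) (_ : Module R M), Nontrivial M ∧ S.Mem M) ↔
      ∃ m : Ideal R, m.IsMaximal ∧ S.Mem (R ⧸ m) := by
  constructor
  · rintro ⟨M, _, _, hnt, hM⟩
    obtain ⟨x, hx⟩ := exists_ne (0 : M)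
    set f : R →ₗ[R] M := LinearMap.toSpanSingleton R M x
    have hker : S.Mem (R ⧸ LinearMap.ker f) := by
      refine S.mem_of_injective ((LinearMap.ker f).liftQ f le_rfl) ?_ hM
      rw [← LinearMap.ker_eq_bot, Submodule.ker_liftQ_eq_bot _ _ _ le_rfl]
    have hne : LinearMap.ker f ≠ ⊤ := by
      intro h
      have : f 1 = 0 := by
        have : (1 : R) ∈ LinearMap.ker f := by rw [h]; trivial
        simpa using this
      simp [f, LinearMap.toSpanSingleton_apply] at this
      exact hx this
    obtain ⟨m, hm, hle⟩ := Ideal.exists_le_maximal _ hne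
    refine ⟨m, hm, ?_⟩
    refine S.mem_of_surjective (Submodule.mapQ (LinearMap.ker f) m LinearMap.id hle) ?_ hker
    intro y
    obtain ⟨r, rfl⟩ := Submodule.mkQ_surjective m y
    exact ⟨Submodule.Quotient.mk r, rfl⟩
  · rintro ⟨m, hm, hmem⟩
    exact ⟨R ⧸ m, inferInstance, inferInstance,
      Submodule.Quotient.nontrivial_iff.mpr hm.ne_top, hmem⟩
end

section
/- Let R be a commutative noetherian ring and let S be a Serre class of R-modules such that R/m belongs to S for every maximal ideal m of R. If M is a minimax R-module, then the R-module Ext^j_R(R/m, M) belongs to S for every maximal ideal m of R and every integer j ≥ 0. -/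
universe u

open CategoryTheory Opposite

/-- An `R`-module `M` is *minimax* if it has a finitely generated submodule `N`
such that `M/N` is artinian. -/
def IsMinimax (R : Type u) [CommRing R] (M : Type u) [AddCommGroup M] [Module R M] : Prop :=
  ∃ N : Submodule R M, N.FG ∧ IsArtinian R (M ⧸ N)

section Algebra
variable {R : Type u} [CommRing R]

lemma SerreClass.mem_of_equiv (S : SerreClass R) {M N : Type u} [AddCommGroup M] [Module R M]
    [AddCommGroup N] [Module R N] (e : M ≃ₗ[R] N) (h : S.Mem M) : S.Mem N :=
  S.mem_of_injective e.symm.toLinearMap e.symm.injective h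

lemma SerreClass.mem_of_isFiniteLength (S : SerreClass R)
    (hS : ∀ m : Ideal R, m.IsMaximal → S.Mem (R ⧸ m)) (m₀ : Ideal R) (hm₀ : m₀.IsMaximal)
    {V : Type u} [AddCommGroup V] [Module R V] (h : IsFiniteLength R V) : S.Mem V := by
  induction h with
  | of_subsingleton =>
    exact S.mem_of_surjective (0 : (R ⧸ m₀) →ₗ[R] _)
      (fun y => ⟨0, Subsingleton.elim _ _⟩) (hS m₀ hm₀)
  | @of_simple_quotient V _ _ N hsimple hN ih =>
    refine S.mem_of_extension N ih ?_
    obtain ⟨I, hI, ⟨e⟩⟩ := isSimpleModule_iff_quot_maximal.mp hsimple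
    exact S.mem_of_equiv e.symm (hS I hI)

/-- A module killed by a maximal ideal is semisimple. -/
lemma isSemisimpleModule_of_torsion {V : Type u} [AddCommGroup V] [Module R V]
    (m : Ideal R) (hm : m.IsMaximal) (tor : ∀ r ∈ m, ∀ x : V, r • x = 0) :
    IsSemisimpleModule R V := by
  apply IsSemisimpleModule.of_sSup_simples_eq_top
  rw [eq_top_iff]
  intro x _
  rcases eq_or_ne x 0 with rfl | hx
  · exact Submodule.zero_mem _
  have hker : LinearMap.ker (LinearMap.toSpanSingleton R V x) = m := by
    refine (hm.eq_of_le ?_ ?_).symm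
    · intro h
      apply hx
      have h1 : (1 : R) ∈ LinearMap.ker (LinearMap.toSpanSingleton R V x) := by
        rw [h]; trivial
      simpa using h1
    · intro r hr
      exact tor r hr x
  have hq : IsSimpleModule R (R ⧸ LinearMap.ker (LinearMap.toSpanSingleton R V x)) := by
    rw [hker, isSimpleModule_iff_isCoatom]
    exact hm.out
  have hsimple : IsSimpleModule R ↥(Submodule.span R {x} : Submodule R V) := by
    rw [LinearMap.span_singleton_eq_range]
    exact IsSimpleModule.congr
      (LinearMap.quotKerEquivRange (LinearMap.toSpanSingleton R V x)).symm
  exact le_sSup (show (Submodule.span R {x} : Submodule R V) ∈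
    {p : Submodule R V | IsSimpleModule R ↥p} from hsimple) (Submodule.mem_span_singleton_self x)
end Algebra

section Minimax
variable {R : Type u} [CommRing R] [IsNoetherianRing R]
variable {V W : Type u} [AddCommGroup V] [Module R V] [AddCommGroup W] [Module R W]

lemma IsMinimax.of_injective (f : V →ₗ[R] W) (hf : Function.Injective f)
    (h : IsMinimax R W) : IsMinimax R V := by
  obtain ⟨N, hfg, hart⟩ := h
  refine ⟨N.comap f, ?_, ?_⟩
  · haveI : IsNoetherian R N := isNoetherian_of_fg_of_noetherian N hfg
    have hinj : Function.Injective (f.restrict (p := N.comap f) (q := N) (fun x hx => hx)) :=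
      fun a b hab => Subtype.ext (hf (congrArg Subtype.val hab))
    haveI := isNoetherian_of_injective _ hinj
    exact Module.Finite.iff_fg.mp inferInstance
  · haveI := hart
    have hinj : Function.Injective (Submodule.mapQ (N.comap f) N f le_rfl) := by
      intro a b hab
      obtain ⟨x, rfl⟩ := Submodule.Quotient.mk_surjective _ a
      obtain ⟨y, rfl⟩ := Submodule.Quotient.mk_surjective _ b
      rw [Submodule.mapQ_apply, Submodule.mapQ_apply, Submodule.Quotient.eq] at hab
      rw [Submodule.Quotient.eq]
      simpa [map_sub] using hab
    exact isArtinian_of_injective _ hinj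

lemma IsMinimax.of_surjective (f : V →ₗ[R] W) (hf : Function.Surjective f)
    (h : IsMinimax R V) : IsMinimax R W := by
  obtain ⟨N, hfg, hart⟩ := h
  refine ⟨N.map f, hfg.map f, ?_⟩
  haveI := hart
  have hle : N ≤ (N.map f).comap f := fun x hx => Submodule.mem_comap.mpr ⟨x, hx, rfl⟩
  have hsurj : Function.Surjective (Submodule.mapQ N (N.map f) f hle) := by
    intro b
    obtain ⟨y, rfl⟩ := Submodule.Quotient.mk_surjective _ b
    obtain ⟨x, rfl⟩ := hf y
    refine ⟨Submodule.Quotient.mk x, ?_⟩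
    rw [Submodule.mapQ_apply]
  exact isArtinian_of_surjective _ _ hsurj

omit [IsNoetherianRing R] in
lemma IsMinimax.pi (k : ℕ) (h : IsMinimax R V) : IsMinimax R (Fin k → V) := by
  obtain ⟨N, hfg, hart⟩ := h
  refine ⟨Submodule.pi Set.univ (fun _ : Fin k => N), Submodule.fg_pi (fun _ => hfg), ?_⟩
  haveI := hart
  have e := Submodule.quotientPi (fun _ : Fin k => N)
  exact isArtinian_of_injective e.toLinearMap e.injective

end Minimax

section FL
variable {R : Type u} [CommRing R] [IsNoetherianRing R]
variable {V : Type u} [AddCommGroup V] [Module R V]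

lemma isFiniteLength_of_minimax_of_torsion (m : Ideal R) (hm : m.IsMaximal)
    (tor : ∀ r ∈ m, ∀ x : V, r • x = 0)
    (hss : IsSemisimpleModule R V)
    (h : IsMinimax R V) : IsFiniteLength R V := by
  obtain ⟨N, hfg, hart⟩ := h
  haveI := hart
  haveI : IsNoetherian R N := isNoetherian_of_fg_of_noetherian N hfg
  haveI : IsArtinian R N := (IsSemisimpleModule.finite_tfae.out 1 2).mp ‹_›
  haveI : IsNoetherian R (V ⧸ N) := (IsSemisimpleModule.finite_tfae.out 2 1).mp ‹_›
  rw [isFiniteLength_iff_isNoetherian_isArtinian]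
  exact ⟨(isNoetherian_iff_submodule_quotient N).mpr ⟨‹_›, ‹_›⟩,
    (isArtinian_iff_submodule_quotient N).mpr ⟨‹_›, ‹_›⟩⟩
end FL

noncomputable section Resolution
variable (R : Type u) [CommRing R] [IsNoetherianRing R]

def coverNum (A : Type u) [AddCommGroup A] [Module R A] [Module.Finite R A] : ℕ :=
  (Module.Finite.exists_fin' R A).choose

def coverMap (A : Type u) [AddCommGroup A] [Module R A] [Module.Finite R A] :
    (Fin (coverNum R A) → R) →ₗ[R] A :=
  (Module.Finite.exists_fin' R A).choose_spec.choose

lemma coverMap_surjective (A : Type u) [AddCommGroup A] [Module R A] [Module.Finite R A] :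
    Function.Surjective (coverMap R A) :=
  (Module.Finite.exists_fin' R A).choose_spec.choose_spec

instance {k : ℕ} (K : Submodule R (Fin k → R)) : Module.Finite R ↥K := by
  haveI : IsNoetherian R (Fin k → R) := isNoetherian_pi
  infer_instance

def nextMap {k : ℕ} (K : Submodule R (Fin k → R)) :
    (Fin (coverNum R ↥K) → R) →ₗ[R] (Fin k → R) :=
  K.subtype ∘ₗ coverMap R ↥K

lemma range_nextMap {k : ℕ} (K : Submodule R (Fin k → R)) :
    LinearMap.range (nextMap R K) = K := by
  rw [nextMap, LinearMap.range_comp, LinearMap.range_eq_top.mpr (coverMap_surjective R ↥K),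
    Submodule.map_top, Submodule.range_subtype]

variable (m : Ideal R)

instance : Module.Finite R (R ⧸ m) :=
  Module.Finite.of_surjective m.mkQ (Submodule.Quotient.mk_surjective m)

def tower : ℕ → Σ k : ℕ, Submodule R (Fin k → R) := fun n =>
  Nat.rec (⟨_, LinearMap.ker (coverMap R (R ⧸ m))⟩ : Σ k : ℕ, Submodule R (Fin k → R))
    (fun _ p => ⟨_, LinearMap.ker (nextMap R p.2)⟩) n

def towerD (n : ℕ) : (Fin ((tower R m (n + 1)).1) → R) →ₗ[R] (Fin ((tower R m n).1) → R) :=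
  nextMap R (tower R m n).2

lemma range_towerD (n : ℕ) : LinearMap.range (towerD R m n) = (tower R m n).2 :=
  range_nextMap R _

lemma ker_towerD (n : ℕ) : LinearMap.ker (towerD R m n) = (tower R m (n + 1)).2 := rfl

def towerPi : (Fin ((tower R m 0).1) → R) →ₗ[R] (R ⧸ m) := coverMap R (R ⧸ m)

lemma ker_towerPi : LinearMap.ker (towerPi R m) = (tower R m 0).2 := rfl

def resComplex : ChainComplex (ModuleCat.{u} R) ℕ :=
  ChainComplex.of (fun n => ModuleCat.of R (Fin ((tower R m n).1) → R))
    (fun n => ModuleCat.ofHom (towerD R m n))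
    (fun n => by
      refine ModuleCat.hom_ext (LinearMap.ext fun x => ?_)
      show towerD R m n (towerD R m (n + 1) x) = 0
      have hx : towerD R m (n + 1) x ∈ LinearMap.ker (towerD R m n) := by
        rw [ker_towerD, ← range_towerD]
        exact LinearMap.mem_range_self _ x
      exact hx)

lemma resComplex_d (n : ℕ) :
    (resComplex R m).d (n + 1) n = ModuleCat.ofHom (towerD R m n) := by
  simp [resComplex]

def resPi : resComplex R m ⟶ (ChainComplex.single₀ (ModuleCat.{u} R)).obj
    (ModuleCat.of R (R ⧸ m)) :=
  (ChainComplex.toSingle₀Equiv _ _).symm ⟨ModuleCat.ofHom (towerPi R m), by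
    rw [resComplex_d]
    ext x
    show towerPi R m (towerD R m 0 x) = 0
    have hx : towerD R m 0 x ∈ LinearMap.ker (towerPi R m) := by
      rw [ker_towerPi, ← range_towerD]
      exact LinearMap.mem_range_self _ x
    exact hx⟩

lemma resPi_f_zero : (resPi R m).f 0 = ModuleCat.ofHom (towerPi R m) :=
  ChainComplex.toSingle₀Equiv_symm_apply_f_zero _ _

lemma resComplex_exactAt_succ (n : ℕ) : (resComplex R m).ExactAt (n + 1) := by
  rw [HomologicalComplex.exactAt_iff' _ (n + 1 + 1) (n + 1) n (by simp) (by simp)]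
  rw [ShortComplex.moduleCat_exact_iff]
  intro x hx
  dsimp at x hx
  change (resComplex R m).d (n + 1) n x = 0 at hx
  rw [resComplex_d] at hx
  have hx' : x ∈ LinearMap.range (towerD R m (n + 1)) := by
    rw [range_towerD, ← ker_towerD]
    exact hx
  obtain ⟨y, hy⟩ := hx'
  refine ⟨y, ?_⟩
  dsimp
  change (resComplex R m).d (n + 1 + 1) (n + 1) y = x
  rw [resComplex_d]
  exact hy

def resolution : ProjectiveResolution (ModuleCat.of R ((R ⧸ m : Type u))) where
  complex := resComplex R m
  projective n := ModuleCat.projective_of_free (Pi.basisFun R (Fin ((tower R m n).1)))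
  π := resPi R m
  quasiIso := ⟨fun n => by
    cases n with
    | zero =>
      rw [ChainComplex.quasiIsoAt₀_iff, ShortComplex.quasiIso_iff_of_zeros']
      · have hw : ModuleCat.ofHom (towerD R m 0) ≫ ModuleCat.ofHom (towerPi R m) = 0 := by
          refine ModuleCat.hom_ext (LinearMap.ext fun x => ?_)
          show towerPi R m (towerD R m 0 x) = 0
          have hx : towerD R m 0 x ∈ LinearMap.ker (towerPi R m) := by
            rw [ker_towerPi, ← range_towerD]
            exact LinearMap.mem_range_self _ x
          exact hx
        have hex : (ShortComplex.mk (ModuleCat.ofHom (towerD R m 0))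
            (ModuleCat.ofHom (towerPi R m)) hw).Exact := by
          rw [ShortComplex.moduleCat_exact_iff]
          intro x hx
          have hx' : x ∈ LinearMap.range (towerD R m 0) := by
            rw [range_towerD, ← ker_towerPi]
            exact hx
          exact hx'
        have hepi : Epi (ShortComplex.mk (ModuleCat.ofHom (towerD R m 0))
            (ModuleCat.ofHom (towerPi R m)) hw).g :=
          (ModuleCat.epi_iff_surjective _).mpr (coverMap_surjective R (R ⧸ m))
        refine (ShortComplex.exact_and_epi_g_iff_of_iso ?_).2 ⟨hex, hepi⟩
        exact ShortComplex.isoMk (Iso.refl _) (Iso.refl _) (Iso.refl _)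
          (by simp [resComplex_d]; rfl) (by simp [resPi_f_zero]; rfl)
      all_goals rfl
    | succ n =>
      rw [quasiIsoAt_iff_exactAt']
      · exact resComplex_exactAt_succ R m n
      · exact ChainComplex.exactAt_succ_single_obj _ _⟩



variable {M' : ModuleCat.{u} R}

/-- The chain map on the resolution given by multiplication by `r`. -/
def smulId (r : R) : resComplex R m ⟶ resComplex R m where
  f n := r • 𝟙 _
  comm' := by intros; simp

lemma smulId_comp_pi (r : R) (hr : r ∈ m) : smulId R m r ≫ resPi R m = 0 := by
  refine (ChainComplex.toSingle₀Equiv (resComplex R m)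
    (ModuleCat.of R ((R ⧸ m : Type u)))).injective (Subtype.ext ?_)
  rw [ChainComplex.toSingle₀Equiv_apply_coe, ChainComplex.toSingle₀Equiv_apply_coe,
    HomologicalComplex.comp_f, HomologicalComplex.zero_f_apply]
  show (r • 𝟙 _) ≫ (resPi R m).f 0 = 0
  rw [Linear.smul_comp, Category.id_comp]
  ext x
  show r • ((resPi R m).f 0 x) = 0
  obtain ⟨a, ha⟩ := Submodule.Quotient.mk_surjective m ((resPi R m).f 0 x)
  rw [← ha]
  change r • (Submodule.Quotient.mk a : R ⧸ m) = 0
  rw [← Submodule.Quotient.mk_smul, Submodule.Quotient.mk_eq_zero]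
  exact Ideal.mul_mem_right a m hr

/-- Multiplication by `r ∈ m` on the resolution is homotopic to zero. -/
def smulHomotopy (r : R) (hr : r ∈ m) : Homotopy (smulId R m r) 0 :=
  ProjectiveResolution.liftHomotopyZero (P := resolution R m) (Q := resolution R m)
    (smulId R m r) (smulId_comp_pi R m r hr)

lemma smul_eq_comp (r : R) (n : ℕ) (f : (resComplex R m).X n ⟶ M') :
    r • f = (r • 𝟙 _) ≫ f := by
  rw [Linear.smul_comp, Category.id_comp]

lemma smul_eq_zero_deg0 (r : R) (hr : r ∈ m) (f : (resComplex R m).X 0 ⟶ M')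
    (hf : (resComplex R m).d 1 0 ≫ f = 0) : r • f = 0 := by
  have hc := (smulHomotopy R m r hr).comm 0
  rw [dNext_eq_zero _ 0 (by simp), prevD_eq _ (show (ComplexShape.down ℕ).Rel 1 0 by simp)] at hc
  have : (smulId R m r).f 0 = r • 𝟙 _ := rfl
  rw [this] at hc
  rw [smul_eq_comp, hc]
  simp only [HomologicalComplex.zero_f_apply, add_zero, zero_add, Category.assoc,
    Preadditive.add_comp, Limits.zero_comp, hf, Limits.comp_zero]

lemma smul_eq_boundary (r : R) (hr : r ∈ m) (n : ℕ) (f : (resComplex R m).X (n + 1) ⟶ M')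
    (hf : (resComplex R m).d (n + 2) (n + 1) ≫ f = 0) :
    r • f = (resComplex R m).d (n + 1) n ≫ ((smulHomotopy R m r hr).hom n (n + 1) ≫ f) := by
  have hc := (smulHomotopy R m r hr).comm (n + 1)
  rw [dNext_eq _ (show (ComplexShape.down ℕ).Rel (n + 1) n by simp),
    prevD_eq _ (show (ComplexShape.down ℕ).Rel (n + 2) (n + 1) by simp)] at hc
  have : (smulId R m r).f (n + 1) = r • 𝟙 _ := rfl
  rw [this] at hc
  rw [smul_eq_comp, hc]
  simp only [HomologicalComplex.zero_f_apply, add_zero, Category.assoc,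
    Preadditive.add_comp, hf, Limits.comp_zero]

lemma linearYonedaObj_d_apply (Pc : ChainComplex (ModuleCat.{u} R) ℕ) (Y : ModuleCat.{u} R)
    (a b : ℕ) (f : ↥((Pc.linearYonedaObj R Y).X a)) :
    ((Pc.linearYonedaObj R Y).d a b) f = Pc.d b a ≫ f := by
  rw [ChainComplex.linearYonedaObj_d]
  rfl

end Resolution

/-- Let `R` be a commutative noetherian ring and let `S` be a Serre class of `R`-modules such
that `R/m ∈ S` for every maximal ideal `m` of `R`. If `M` is a minimax `R`-module, then
`Ext^j_R(R/m, M) ∈ S` for every maximal ideal `m` of `R` and every integer `j ≥ 0`. -/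
theorem stmt3 (R : Type u) [CommRing R] [IsNoetherianRing R] (S : SerreClass R)
    (hS : ∀ m : Ideal R, m.IsMaximal → S.Mem (R ⧸ m))
    (M : Type u) [AddCommGroup M] [Module R M] (hM : IsMinimax R M)
    (m : Ideal R) (hm : m.IsMaximal) (j : ℕ) :
    S.Mem ↥(((Ext R (ModuleCat.{u} R) j).obj (op (ModuleCat.of R (R ⧸ m)))).obj
      (ModuleCat.of R M)) := by
  classical
  set M' : ModuleCat.{u} R := ModuleCat.of R M with hM'
  set P : CategoryTheory.ProjectiveResolution (ModuleCat.of R ((R ⧸ m : Type u))) :=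
    resolution R m with hP
  set C' := P.complex.linearYonedaObj R M' with hC'
  -- the index `i = j - 1`
  obtain ⟨i, hi⟩ : ∃ i : ℕ, (ComplexShape.up ℕ).prev j = i := ⟨_, rfl⟩
  set T := C'.sc' i j (j + 1) with hT
  have e : (((Ext R (ModuleCat.{u} R) j).obj (op (ModuleCat.of R (R ⧸ m)))).obj M') ≅
      T.moduleCatLeftHomologyData.H :=
    P.isoExt j M' ≪≫ C'.homologyIsoSc' i j (j + 1) hi (CochainComplex.next ℕ j) ≪≫
      T.moduleCatHomologyIso
  refine S.mem_of_injective e.hom.hom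
    ((ModuleCat.mono_iff_injective e.hom).mp inferInstance) ?_
  -- the kernel-of-g facts
  -- minimaxness
  have hmini : IsMinimax R ↥(T.moduleCatLeftHomologyData.H) := by
    have h1 : IsMinimax R (Fin ((tower R m j).1) → M) := hM.pi _
    have Φ : (Fin ((tower R m j).1) → M) ≃ₗ[R] ↥(T.X₂) :=
      (Pi.basisFun R (Fin ((tower R m j).1))).constr R ≪≫ₗ (ModuleCat.homLinearEquiv (M := P.complex.X j) (N := M') (S := R)).symm
    have h2 : IsMinimax R ↥(T.X₂) := h1.of_surjective Φ.toLinearMap Φ.surjective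
    have h3 : IsMinimax R ↥(LinearMap.ker T.g.hom) :=
      h2.of_injective (LinearMap.ker T.g.hom).subtype (Submodule.injective_subtype _)
    exact h3.of_surjective (LinearMap.range T.moduleCatToCycles).mkQ
      (Submodule.Quotient.mk_surjective _)
  -- torsion
  have tor : ∀ r ∈ m, ∀ x : ↥(T.moduleCatLeftHomologyData.H), r • x = 0 := by
    intro r hr x
    obtain ⟨ξ, rfl⟩ := Submodule.Quotient.mk_surjective _ x
    change r • (Submodule.Quotient.mk ξ : ↥(LinearMap.ker T.g.hom) ⧸ LinearMap.range T.moduleCatToCycles) = 0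
    rw [← Submodule.Quotient.mk_smul, Submodule.Quotient.mk_eq_zero]
    have hξmem := ξ.2
    rw [LinearMap.mem_ker] at hξmem
    have hξ : P.complex.d (j + 1) j ≫ ξ.1 = 0 :=
      (linearYonedaObj_d_apply R P.complex M' j (j + 1) ξ.1).symm.trans hξmem
    cases j with
    | zero =>
      refine ⟨0, ?_⟩
      apply Subtype.ext
      have h0 : r • ξ.1 = (0 : ↥(T.X₂)) := smul_eq_zero_deg0 R m r hr ξ.1 hξ
      simp only [LinearMap.codRestrict_apply, SetLike.val_smul, map_zero]
      exact h0.symm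
    | succ n =>
      -- here i = n
      have hin : i = n := by
        rw [CochainComplex.prev_nat_succ] at hi
        omega
      subst hin
      refine ⟨(smulHomotopy R m r hr).hom i (i + 1) ≫ ξ.1, ?_⟩
      apply Subtype.ext
      simp only [LinearMap.codRestrict_apply, SetLike.val_smul]
      refine (linearYonedaObj_d_apply R P.complex M' i (i + 1) _).trans ?_
      exact (smul_eq_boundary R m r hr i ξ.1 hξ).symm
  exact S.mem_of_isFiniteLength hS m hm
    (isFiniteLength_of_minimax_of_torsion m hm tor (isSemisimpleModule_of_torsion m hm tor) hmini)
end

section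
/- Let (R,m) be a commutative noetherian local ring and let S be a Serre class of R-modules containing a nonzero R-module. If M is a minimax R-module, then the R-module Ext^j_R(R/m, M) belongs to S for every integer j ≥ 0. -/
universe u

open CategoryTheory Opposite

namespace Stmt4Aux

variable {R : Type u} [CommRing R]

/-- A Serre class is nonempty as a hypothesis package. -/
abbrev Nonemp (S : SerreClass R) : Prop :=
  ∃ (M : Type u) (_ : AddCommGroup M) (_ : Module R M), Nontrivial M ∧ S.Mem M

section Serre

variable (S : SerreClass R)

theorem mem_of_subsingleton (hS : Nonemp S) (V : Type u) [AddCommGroup V] [Module R V] [Subsingleton V] :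
    S.Mem V := by
  obtain ⟨X, _, _, _, hX⟩ := hS
  exact S.mem_of_injective (0 : V →ₗ[R] X) (fun a b _ => Subsingleton.elim a b) hX

theorem mem_of_equiv {V W : Type u} [AddCommGroup V] [Module R V] [AddCommGroup W] [Module R W]
    (e : V ≃ₗ[R] W) (h : S.Mem W) : S.Mem V :=
  S.mem_of_injective e.toLinearMap e.injective h

theorem mem_residue (hS : Nonemp S) [IsLocalRing R] :
    S.Mem (R ⧸ IsLocalRing.maximalIdeal R) := by
  obtain ⟨X, _, _, hX, hXS⟩ := hS
  obtain ⟨x, hx⟩ := exists_ne (0 : X)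
  set f := LinearMap.toSpanSingleton R X x with hf
  have hker : LinearMap.ker f ≠ ⊤ := by
    intro h
    apply hx
    have h1 : (1 : R) ∈ LinearMap.ker f := h ▸ Submodule.mem_top
    simpa [hf, LinearMap.toSpanSingleton] using h1
  have hle : LinearMap.ker f ≤ IsLocalRing.maximalIdeal R := IsLocalRing.le_maximalIdeal hker
  have h1 : S.Mem (R ⧸ LinearMap.ker f) := by
    refine S.mem_of_injective
      ((LinearMap.range f).subtype ∘ₗ (f.quotKerEquivRange).toLinearMap) ?_ hXS
    exact (Submodule.injective_subtype _).comp f.quotKerEquivRange.injective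
  refine S.mem_of_surjective
    (Submodule.mapQ (LinearMap.ker f) (IsLocalRing.maximalIdeal R) LinearMap.id hle) ?_ h1
  intro y
  obtain ⟨r, rfl⟩ := Submodule.mkQ_surjective _ y
  exact ⟨Submodule.Quotient.mk r, by rw [Submodule.mapQ_apply]; rfl⟩

theorem mem_of_span_card (hS : Nonemp S) [IsLocalRing R] :
    ∀ (n : ℕ) (V : Type u) [AddCommGroup V] [Module R V] (s : Finset V),
      s.card ≤ n → Submodule.span R (s : Set V) = ⊤ →
      (∀ r ∈ IsLocalRing.maximalIdeal R, ∀ v : V, r • v = 0) → S.Mem V := by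
  intro n
  induction n with
  | zero =>
    intro V _ _ s hcard hspan _
    obtain rfl : s = ∅ := Finset.card_eq_zero.mp (le_antisymm hcard (Nat.zero_le _))
    have : Subsingleton V := by
      constructor
      intro a b
      have ha : a ∈ Submodule.span R ((∅ : Finset V) : Set V) := hspan ▸ Submodule.mem_top
      have hb : b ∈ Submodule.span R ((∅ : Finset V) : Set V) := hspan ▸ Submodule.mem_top
      simp only [Finset.coe_empty, Submodule.span_empty, Submodule.mem_bot] at ha hb
      rw [ha, hb]
    exact mem_of_subsingleton S hS V
  | succ n ih =>
    intro V _ _ s hcard hspan htor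
    classical
    rcases s.eq_empty_or_nonempty with rfl | ⟨a, ha⟩
    · exact ih V ∅ (Nat.zero_le _) hspan htor
    · set N := Submodule.span R ((s.erase a : Finset V) : Set V) with hN
      have hmemN : S.Mem ↥N := by
        refine ih ↥N ((s.erase a).attach.image
          (fun x => (⟨x.1, Submodule.subset_span x.2⟩ : ↥N))) ?_ ?_ ?_
        · calc ((s.erase a).attach.image _).card ≤ (s.erase a).attach.card :=
                Finset.card_image_le
            _ = (s.erase a).card := Finset.card_attach
            _ ≤ n := by
                have := Finset.card_erase_of_mem ha
                omega
        · apply Submodule.map_injective_of_injective (Submodule.injective_subtype N)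
          rw [Submodule.map_span, Submodule.map_top, Submodule.range_subtype]
          have himg : (N.subtype '' ((s.erase a).attach.image
              (fun x => (⟨x.1, Submodule.subset_span x.2⟩ : ↥N)) : Finset ↥N))
              = ((s.erase a : Finset V) : Set V) := by
            ext v
            constructor
            · rintro ⟨⟨w, hw⟩, hmem, rfl⟩
              simp only [Finset.coe_image, Set.mem_image, Finset.mem_coe,
                Finset.mem_image, Finset.mem_attach] at hmem ⊢
              obtain ⟨⟨y, hy⟩, -, h⟩ := hmem
              cases h
              exact hy
            · intro hv
              refine ⟨⟨v, Submodule.subset_span hv⟩, ?_, rfl⟩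
              simp only [Finset.coe_image, Set.mem_image, Finset.mem_coe, Finset.mem_attach]
              exact ⟨(⟨v, hv⟩ : {x // x ∈ s.erase a}), by simp, rfl⟩
          rw [himg]
        · intro r hr v
          ext
          exact htor r hr v.1
      have hmemQ : S.Mem (V ⧸ N) := by
        set φ := LinearMap.toSpanSingleton R (V ⧸ N) (Submodule.Quotient.mk a) with hφ
        have hm : IsLocalRing.maximalIdeal R ≤ LinearMap.ker φ := by
          intro r hr
          simp only [LinearMap.mem_ker, hφ, LinearMap.toSpanSingleton_apply]
          rw [← Submodule.Quotient.mk_smul, htor r hr a, Submodule.Quotient.mk_zero]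
        refine S.mem_of_surjective ((IsLocalRing.maximalIdeal R).liftQ φ hm) ?_
          (mem_residue S hS)
        rw [← LinearMap.range_eq_top, Submodule.range_liftQ]
        rw [← LinearMap.span_singleton_eq_range]
        rw [eq_top_iff]
        have h2 : (⊤ : Submodule R (V ⧸ N)) = Submodule.map N.mkQ ⊤ := by
          rw [Submodule.map_top, Submodule.range_mkQ]
        rw [h2, ← hspan, Submodule.map_span]
        refine Submodule.span_le.mpr ?_
        rintro y ⟨v, hv, rfl⟩
        rcases eq_or_ne v a with rfl | hva
        · exact Submodule.subset_span rfl
        · have : N.mkQ v = 0 := by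
            rw [Submodule.mkQ_apply, Submodule.Quotient.mk_eq_zero]
            exact Submodule.subset_span (Finset.mem_erase.mpr ⟨hva, hv⟩)
          rw [this]
          exact Submodule.zero_mem _
      exact S.mem_of_extension N hmemN hmemQ

theorem mem_of_fg_torsion (hS : Nonemp S) [IsLocalRing R] (V : Type u) [AddCommGroup V] [Module R V]
    (hfg : (⊤ : Submodule R V).FG)
    (htor : ∀ r ∈ IsLocalRing.maximalIdeal R, ∀ v : V, r • v = 0) : S.Mem V := by
  obtain ⟨s, hs⟩ := hfg
  exact mem_of_span_card S hS s.card V s le_rfl hs htor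

theorem finite_of_artinian {K V : Type*} [DivisionRing K] [AddCommGroup V] [Module K V]
    [IsArtinian K V] : Module.Finite K V := by
  have hli : LinearIndependent K ((↑) : Module.Basis.ofVectorSpaceIndex K V → V) := by
    have := (Module.Basis.ofVectorSpace K V).linearIndependent
    rwa [Module.Basis.coe_ofVectorSpace] at this
  have hfin : (Module.Basis.ofVectorSpaceIndex K V).Finite :=
    IsArtinian.finite_of_linearIndependent hli
  haveI := hfin.to_subtype
  exact Module.Finite.of_basis (Module.Basis.ofVectorSpace K V)

theorem mem_of_artinian_torsion (hS : Nonemp S) [IsLocalRing R] (V : Type u) [AddCommGroup V] [Module R V]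
    [IsArtinian R V]
    (htor : ∀ r ∈ IsLocalRing.maximalIdeal R, ∀ v : V, r • v = 0) : S.Mem V := by
  have htors : Module.IsTorsionBySet R V (IsLocalRing.maximalIdeal R) :=
    fun v r => htor r.1 r.2 v
  letI : Module (R ⧸ IsLocalRing.maximalIdeal R) V := htors.module
  haveI := htors.isScalarTower (S := R)
  haveI := IsLocalRing.maximalIdeal.isMaximal R
  letI : Field (R ⧸ IsLocalRing.maximalIdeal R) := Ideal.Quotient.field _
  haveI : IsArtinian (R ⧸ IsLocalRing.maximalIdeal R) V := isArtinian_of_tower R inferInstance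
  have hfin : Module.Finite (R ⧸ IsLocalRing.maximalIdeal R) V :=
    finite_of_artinian (K := R ⧸ IsLocalRing.maximalIdeal R) (V := V)
  obtain ⟨s, hs⟩ := hfin.fg_top
  refine mem_of_fg_torsion S hS V ⟨s, ?_⟩ htor
  rw [eq_top_iff]
  intro x _
  have hx : x ∈ Submodule.span (R ⧸ IsLocalRing.maximalIdeal R) (s : Set V) :=
    hs ▸ Submodule.mem_top
  refine Submodule.span_induction ?_ ?_ ?_ ?_ hx
  · exact fun y hy => Submodule.subset_span hy
  · exact Submodule.zero_mem _
  · exact fun y z _ _ hy hz => Submodule.add_mem _ hy hz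
  · intro c y _ hy
    obtain ⟨r, rfl⟩ := Ideal.Quotient.mk_surjective c
    have : (Ideal.Quotient.mk (IsLocalRing.maximalIdeal R) r) • y = r • y :=
      Module.IsTorsionBySet.mk_smul htors r y
    rw [this]
    exact Submodule.smul_mem _ r hy

end Serre


section Minimax

variable [IsNoetherianRing R]

theorem fg_of_le {W : Type u} [AddCommGroup W] [Module R W] {N P : Submodule R W}
    (hN : N.FG) (hle : P ≤ N) : P.FG := by
  haveI : IsNoetherian R ↥N := isNoetherian_of_fg_of_noetherian N hN
  have h1 : (Submodule.comap N.subtype P).FG := IsNoetherian.noetherian _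
  have h2 : (Submodule.map N.subtype (Submodule.comap N.subtype P)).FG := h1.map _
  rwa [Submodule.map_comap_subtype, inf_of_le_right hle] at h2

theorem isMinimax_of_injective {V W : Type u} [AddCommGroup V] [Module R V]
    [AddCommGroup W] [Module R W] (f : V →ₗ[R] W) (hf : Function.Injective f)
    (h : IsMinimax R W) : IsMinimax R V := by
  obtain ⟨N, hNfg, hNart⟩ := h
  refine ⟨Submodule.comap f N, ?_, ?_⟩
  · have h1 : (Submodule.map f (Submodule.comap f N)).FG :=
      fg_of_le hNfg (Submodule.map_comap_le f N)
    have e := Submodule.equivMapOfInjective f hf (Submodule.comap f N)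
    haveI : Module.Finite R ↥(Submodule.map f (Submodule.comap f N)) :=
      Module.Finite.iff_fg.mpr h1
    haveI : Module.Finite R ↥(Submodule.comap f N) := Module.Finite.equiv e.symm
    exact Module.Finite.iff_fg.mp this
  · set g := Submodule.mapQ (Submodule.comap f N) N f le_rfl with hg
    have hginj : Function.Injective g := by
      intro x y hxy
      obtain ⟨x, rfl⟩ := Submodule.mkQ_surjective _ x
      obtain ⟨y, rfl⟩ := Submodule.mkQ_surjective _ y
      simp only [hg, Submodule.mkQ_apply, Submodule.mapQ_apply] at hxy
      have h3 : f x - f y ∈ N := (Submodule.Quotient.eq _).mp hxy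
      rw [← map_sub] at h3
      exact (Submodule.Quotient.eq _).mpr h3
    exact isArtinian_of_injective g hginj

theorem isMinimax_of_surjective {V W : Type u} [AddCommGroup V] [Module R V]
    [AddCommGroup W] [Module R W] (f : V →ₗ[R] W) (hf : Function.Surjective f)
    (h : IsMinimax R V) : IsMinimax R W := by
  obtain ⟨N, hNfg, hNart⟩ := h
  refine ⟨Submodule.map f N, hNfg.map f, ?_⟩
  set g := Submodule.mapQ N (Submodule.map f N) f (Submodule.le_comap_map f N) with hg
  have hgsurj : Function.Surjective g := by
    intro y
    obtain ⟨y, rfl⟩ := Submodule.mkQ_surjective _ y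
    obtain ⟨x, rfl⟩ := hf y
    exact ⟨Submodule.Quotient.mk x, by simp [hg, Submodule.mapQ_apply]⟩
  exact isArtinian_of_surjective _ g hgsurj

theorem isMinimax_of_equiv {V W : Type u} [AddCommGroup V] [Module R V]
    [AddCommGroup W] [Module R W] (e : V ≃ₗ[R] W) (h : IsMinimax R W) : IsMinimax R V :=
  isMinimax_of_injective e.toLinearMap e.injective h

theorem isMinimax_pi (M : Type u) [AddCommGroup M] [Module R M] (h : IsMinimax R M) (n : ℕ) :
    IsMinimax R (Fin n → M) := by
  obtain ⟨N, hNfg, hNart⟩ := h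
  refine ⟨Submodule.pi Set.univ (fun _ : Fin n => N), Submodule.fg_pi (fun _ => hNfg), ?_⟩
  have e := Submodule.quotientPi (fun _ : Fin n => N)
  haveI : IsArtinian R (∀ _ : Fin n, M ⧸ N) := isArtinian_pi
  exact isArtinian_of_linearEquiv e.symm

end Minimax

theorem mem_of_minimax_torsion (S : SerreClass R) (hS : Nonemp S) [IsNoetherianRing R]
    [IsLocalRing R] (V : Type u) [AddCommGroup V] [Module R V] (h : IsMinimax R V)
    (htor : ∀ r ∈ IsLocalRing.maximalIdeal R, ∀ v : V, r • v = 0) : S.Mem V := by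
  obtain ⟨N, hfg, hart⟩ := h
  refine S.mem_of_extension N ?_ ?_
  · refine mem_of_fg_torsion S hS ↥N (Submodule.fg_top N |>.mpr hfg) ?_
    intro r hr v
    ext
    exact htor r hr v.1
  · haveI : IsArtinian R (V ⧸ N) := hart
    refine mem_of_artinian_torsion S hS (V ⧸ N) ?_
    intro r hr v
    obtain ⟨v, rfl⟩ := Submodule.mkQ_surjective _ v
    rw [Submodule.mkQ_apply, ← Submodule.Quotient.mk_smul, htor r hr v,
      Submodule.Quotient.mk_zero]


section Resolution

variable (R)
variable [IsNoetherianRing R] [IsLocalRing R]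

noncomputable section

/-- Choose a finite free cover of a submodule of a finite free module. -/
def pick (m : ℕ) (K : Submodule R (Fin m → R)) :
    Σ c : ℕ, {ψ : (Fin c → R) →ₗ[R] (Fin m → R) // LinearMap.range ψ = K} := by
  apply Classical.choice
  obtain ⟨s, hs⟩ := IsNoetherian.noetherian K
  set v : Fin s.card → (Fin m → R) := fun i => (s.equivFin.symm i : (Fin m → R)) with hv
  refine ⟨s.card, Fintype.linearCombination R v, ?_⟩
  rw [Fintype.range_linearCombination]
  have : Set.range v = (s : Set (Fin m → R)) := by
    ext x
    constructor
    · rintro ⟨i, rfl⟩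
      exact (s.equivFin.symm i).2
    · intro hx
      exact ⟨s.equivFin ⟨x, hx⟩, by simp [hv]⟩
  rw [this, hs]

/-- The augmentation onto the residue field. -/
def resπ0 : (Fin 1 → R) →ₗ[R] (R ⧸ IsLocalRing.maximalIdeal R) :=
  (IsLocalRing.maximalIdeal R).mkQ ∘ₗ LinearMap.proj (0 : Fin 1)

lemma resπ0_surjective : Function.Surjective (resπ0 R) := by
  intro y
  obtain ⟨r, rfl⟩ := Submodule.mkQ_surjective _ y
  exact ⟨fun _ => r, rfl⟩

/-- The sequence of syzygy data. -/
def st : ℕ → Σ m : ℕ, Submodule R (Fin m → R)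
  | 0 => ⟨1, LinearMap.ker (resπ0 R)⟩
  | i + 1 => ⟨(pick R (st i).1 (st i).2).1, LinearMap.ker (pick R (st i).1 (st i).2).2.1⟩

/-- The ranks of the free modules in the resolution. -/
def nn (i : ℕ) : ℕ := (st R i).1

/-- The differentials of the resolution. -/
def DD (i : ℕ) : (Fin (nn R (i + 1)) → R) →ₗ[R] (Fin (nn R i) → R) :=
  (pick R (st R i).1 (st R i).2).2.1

lemma range_DD (i : ℕ) : LinearMap.range (DD R i) = (st R i).2 :=
  (pick R (st R i).1 (st R i).2).2.2

lemma ker_DD (i : ℕ) : LinearMap.ker (DD R i) = (st R (i + 1)).2 := rfl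

lemma range_DD_zero : LinearMap.range (DD R 0) = LinearMap.ker (resπ0 R) :=
  range_DD R 0

lemma range_DD_succ (i : ℕ) : LinearMap.range (DD R (i + 1)) = LinearMap.ker (DD R i) :=
  (range_DD R (i + 1)).trans (ker_DD R i).symm

/-- The resolution as a chain complex of modules. -/
def res : ChainComplex (ModuleCat.{u} R) ℕ :=
  ChainComplex.of (fun i => ModuleCat.of R (Fin (nn R i) → R))
    (fun i => ModuleCat.ofHom (DD R i))
    (fun i => by
      refine ModuleCat.hom_ext (LinearMap.ext fun x => ?_)
      show DD R i (DD R (i + 1) x) = 0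
      have : DD R (i + 1) x ∈ LinearMap.ker (DD R i) := by
        rw [← range_DD_succ]
        exact ⟨x, rfl⟩
      exact this)

lemma res_d (i : ℕ) : (res R).d (i + 1) i = ModuleCat.ofHom (DD R i) := by
  simp [res]

instance res_projective (n : ℕ) : Projective ((res R).X n) := by
  have : Module.Projective R (Fin (nn R n) → R) :=
    Module.Projective.of_basis (Pi.basisFun R (Fin (nn R n)))
  exact (IsProjective.iff_projective _).mp this

/-- The augmentation map of the resolution. -/
def resπ : res R ⟶ (ChainComplex.single₀ (ModuleCat.{u} R)).obj
    (ModuleCat.of R (R ⧸ IsLocalRing.maximalIdeal R)) :=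
  (ChainComplex.toSingle₀Equiv _ _).symm ⟨ModuleCat.ofHom (resπ0 R), by
    rw [res_d]
    ext x
    show resπ0 R (DD R 0 x) = 0
    have : DD R 0 x ∈ LinearMap.ker (resπ0 R) := by
      rw [← range_DD_zero]
      exact ⟨x, rfl⟩
    exact this⟩

lemma resπ_f_zero : (resπ R).f 0 = ModuleCat.ofHom (resπ0 R) := by
  exact ChainComplex.toSingle₀Equiv_symm_apply_f_zero _ _

lemma res_exactAt_succ (n : ℕ) : (res R).ExactAt (n + 1) := by
  rw [HomologicalComplex.exactAt_iff' _ (n + 2) (n + 1) n (by simp) (by simp)]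
  rw [ShortComplex.moduleCat_exact_iff_range_eq_ker]
  show LinearMap.range ((res R).d (n + 2) (n + 1)).hom = LinearMap.ker ((res R).d (n + 1) n).hom
  rw [res_d, res_d]
  exact range_DD_succ R n

/-- The projective resolution of the residue field. -/
def resolution :
    ProjectiveResolution (ModuleCat.of R (R ⧸ IsLocalRing.maximalIdeal R)) where
  complex := res R
  π := resπ R
  quasiIso := ⟨fun n => by
    cases n with
    | zero =>
      rw [ChainComplex.quasiIsoAt₀_iff, ShortComplex.quasiIso_iff_of_zeros']
      · constructor
        · rw [ShortComplex.moduleCat_exact_iff_range_eq_ker]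
          show LinearMap.range ((res R).d 1 0).hom = LinearMap.ker ((resπ R).f 0).hom
          rw [res_d, resπ_f_zero]
          exact range_DD_zero R
        · rw [ModuleCat.epi_iff_surjective]
          show Function.Surjective ((resπ R).f 0)
          rw [resπ_f_zero]
          exact resπ0_surjective R
      all_goals rfl
    | succ n =>
      rw [quasiIsoAt_iff_exactAt']
      · exact res_exactAt_succ R n
      · exact ChainComplex.exactAt_succ_single_obj _ _⟩

end

end Resolution


section Homotopy

variable (R)
variable [IsNoetherianRing R] [IsLocalRing R]

lemma smul_residue_zero {r : R} (hr : r ∈ IsLocalRing.maximalIdeal R)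
    (z : R ⧸ IsLocalRing.maximalIdeal R) : r • z = 0 := by
  obtain ⟨y, rfl⟩ := Submodule.mkQ_surjective _ z
  rw [Submodule.mkQ_apply, ← Submodule.Quotient.mk_smul, Submodule.Quotient.mk_eq_zero,
    smul_eq_mul]
  exact Ideal.mul_mem_right y _ hr

lemma exists_lift (i : ℕ) (g : (Fin (nn R i) → R) →ₗ[R] (Fin (nn R i) → R))
    (hg : LinearMap.range g ≤ LinearMap.range (DD R i)) :
    ∃ h : (Fin (nn R i) → R) →ₗ[R] (Fin (nn R (i + 1)) → R), DD R i ∘ₗ h = g := by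
  obtain ⟨h, hh⟩ := Module.projective_lifting_property
    ((DD R i).rangeRestrict)
    (LinearMap.codRestrict (LinearMap.range (DD R i)) g (fun x => hg ⟨x, rfl⟩))
    (DD R i).surjective_rangeRestrict
  exact ⟨h, LinearMap.ext fun x => congrArg Subtype.val (LinearMap.congr_fun hh x)⟩

/-- The homotopy data at level `i`. -/
def HP (r : R) (i : ℕ) : Type u :=
  {p : ((Fin (nn R i) → R) →ₗ[R] (Fin (nn R i) → R)) ×
       ((Fin (nn R i) → R) →ₗ[R] (Fin (nn R (i + 1)) → R)) //
     DD R i ∘ₗ p.2 = p.1 ∧ p.1 ∘ₗ DD R i = r • DD R i}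

noncomputable def hpZero (r : R) (hr : r ∈ IsLocalRing.maximalIdeal R) :
    {p : HP R r 0 // p.1.1 = r • LinearMap.id} := by
  have hrange : LinearMap.range ((r • LinearMap.id : (Fin (nn R 0) → R) →ₗ[R] _)) ≤
      LinearMap.range (DD R 0) := by
    rw [range_DD_zero]
    rintro _ ⟨x, rfl⟩
    show resπ0 R ((r • LinearMap.id : (Fin (nn R 0) → R) →ₗ[R] (Fin (nn R 0) → R)) x) = 0
    rw [LinearMap.smul_apply, LinearMap.id_apply]
    exact ((resπ0 R).map_smul r x).trans (smul_residue_zero R hr _)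
  exact ⟨⟨(r • LinearMap.id, (exists_lift R 0 (r • LinearMap.id) hrange).choose),
    (exists_lift R 0 (r • LinearMap.id) hrange).choose_spec,
    LinearMap.ext fun x => by simp⟩, rfl⟩

noncomputable def hpStep (r : R) (i : ℕ) (p : HP R r i) :
    {p' : HP R r (i + 1) // p'.1.1 = r • LinearMap.id - p.1.2 ∘ₗ DD R i} := by
  obtain ⟨h1, h2⟩ := p.2
  set q' : (Fin (nn R (i + 1)) → R) →ₗ[R] (Fin (nn R (i + 1)) → R) :=
    r • LinearMap.id - p.1.2 ∘ₗ DD R i with hq'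
  have hrange : LinearMap.range q' ≤ LinearMap.range (DD R (i + 1)) := by
    rw [range_DD_succ]
    rintro _ ⟨x, rfl⟩
    show DD R i (q' x) = 0
    have hx : DD R i (p.1.2 (DD R i x)) = p.1.1 (DD R i x) := LinearMap.congr_fun h1 (DD R i x)
    have hx2 : p.1.1 (DD R i x) = r • DD R i x := LinearMap.congr_fun h2 x
    simp [hq', hx, hx2]
  refine ⟨⟨(q', (exists_lift R (i + 1) q' hrange).choose),
    (exists_lift R (i + 1) q' hrange).choose_spec, ?_⟩, rfl⟩
  refine LinearMap.ext fun x => ?_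
  have h0 : DD R i (DD R (i + 1) x) = 0 := by
    have hmem : DD R (i + 1) x ∈ LinearMap.ker (DD R i) := by
      rw [← range_DD_succ]
      exact ⟨x, rfl⟩
    exact hmem
  show q' (DD R (i + 1) x) = r • DD R (i + 1) x
  rw [hq']
  simp [h0]

noncomputable def hseq (r : R) (hr : r ∈ IsLocalRing.maximalIdeal R) : ∀ i : ℕ, HP R r i
  | 0 => (hpZero R r hr).1
  | i + 1 => (hpStep R r i (hseq r hr i)).1

lemma hseq_zero_q (r : R) (hr : r ∈ IsLocalRing.maximalIdeal R) :
    (hseq R r hr 0).1.1 = r • LinearMap.id := (hpZero R r hr).2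

lemma hseq_succ_q (r : R) (hr : r ∈ IsLocalRing.maximalIdeal R) (i : ℕ) :
    (hseq R r hr (i + 1)).1.1 = r • LinearMap.id - (hseq R r hr i).1.2 ∘ₗ DD R i :=
  (hpStep R r i (hseq R r hr i)).2

lemma hseq_comp (r : R) (hr : r ∈ IsLocalRing.maximalIdeal R) (i : ℕ) :
    DD R i ∘ₗ (hseq R r hr i).1.2 = (hseq R r hr i).1.1 := (hseq R r hr i).2.1

end Homotopy


section Glue

variable [IsNoetherianRing R] [IsLocalRing R]

lemma Kd_apply (M : Type u) [AddCommGroup M] [Module R M] (a : ℕ)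
    (u : ↥(((res R).linearYonedaObj R (ModuleCat.of R M)).X a)) :
    ModuleCat.Hom.hom ((((res R).linearYonedaObj R (ModuleCat.of R M)).d a (a + 1)) u)
      = (ModuleCat.Hom.hom u : (Fin (nn R a) → R) →ₗ[R] M) ∘ₗ DD R a := by
  rw [ChainComplex.linearYonedaObj_d, res_d]
  rfl

theorem mem_ext (S : SerreClass R) (hS : Nonemp S)
    (M : Type u) [AddCommGroup M] [Module R M] (hM : IsMinimax R M) (i j : ℕ)
    (hprev : (ComplexShape.up ℕ).prev j = i) (hcase : j = 0 ∨ j = i + 1) :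
    S.Mem ↥(((Ext R (ModuleCat.{u} R) j).obj
      (op (ModuleCat.of R (R ⧸ IsLocalRing.maximalIdeal R)))).obj (ModuleCat.of R M)) := by
  classical
  set K := (res R).linearYonedaObj R (ModuleCat.of R M) with hK
  have hnext : (ComplexShape.up ℕ).next j = j + 1 := CochainComplex.next ℕ j
  set SC := K.sc' i j (j + 1) with hSC
  have isoA : (((Ext R (ModuleCat.{u} R) j).obj
      (op (ModuleCat.of R (R ⧸ IsLocalRing.maximalIdeal R)))).obj (ModuleCat.of R M))
      ≅ SC.moduleCatLeftHomologyData.H :=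
    ((resolution R).isoExt j (ModuleCat.of R M)) ≪≫
      (ShortComplex.homologyMapIso (K.isoSc' i j (j + 1) hprev hnext)) ≪≫
      SC.moduleCatHomologyIso
  refine mem_of_equiv S isoA.toLinearEquiv ?_
  have hgd : ∀ u : ↥(K.X j), ModuleCat.Hom.hom (SC.g.hom u) = (ModuleCat.Hom.hom u : (Fin (nn R j) → R) →ₗ[R] M) ∘ₗ DD R j :=
    fun u => Kd_apply M j u
  refine mem_of_minimax_torsion S hS _ ?_ ?_
  · -- minimax
    have hmm : IsMinimax R ↥(K.X j) := by
      have e2 : (Fin (nn R j) → M) ≃ₗ[R] ↥(K.X j) :=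
        (Module.Basis.constr (Pi.basisFun R (Fin (nn R j))) R).trans (ModuleCat.homLinearEquiv (M := (res R).X j) (N := ModuleCat.of R M) (S := R)).symm
      exact isMinimax_of_equiv e2.symm (isMinimax_pi M hM (nn R j))
    have h1 : IsMinimax R ↥(LinearMap.ker SC.g.hom) :=
      isMinimax_of_injective (LinearMap.ker SC.g.hom).subtype (Submodule.injective_subtype _) hmm
    exact isMinimax_of_surjective
      (Submodule.mkQ (LinearMap.range SC.moduleCatToCycles))
      (Submodule.mkQ_surjective _) h1
  · -- torsion
    intro r hr x
    obtain ⟨x, rfl⟩ := Submodule.mkQ_surjective _ x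
    change r • (Submodule.mkQ (LinearMap.range SC.moduleCatToCycles) x) = 0
    rw [Submodule.mkQ_apply, ← Submodule.Quotient.mk_smul, Submodule.Quotient.mk_eq_zero]
    set xv : (Fin (nn R j) → R) →ₗ[R] M := ModuleCat.Hom.hom x.1 with hxv
    have hc : xv ∘ₗ DD R j = 0 := by
      have h : SC.g.hom x.1 = 0 := x.2
      have h' := congrArg ModuleCat.Hom.hom h
      rw [hgd x.1] at h'
      exact h'
    rcases hcase with rfl | rfl
    · -- j = 0
      have hx0 : r • x = (0 : ↥(LinearMap.ker SC.g.hom)) := by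
        apply Subtype.ext
        apply ModuleCat.hom_ext
        show r • xv = 0
        refine LinearMap.ext fun v => ?_
        have h2 := LinearMap.congr_fun (hseq_comp R r hr 0) v
        rw [hseq_zero_q R r hr] at h2
        simp only [LinearMap.comp_apply, LinearMap.smul_apply, LinearMap.id_apply] at h2
        have h4 := LinearMap.congr_fun hc ((hseq R r hr 0).1.2 v)
        simp only [LinearMap.comp_apply, LinearMap.zero_apply] at h4
        have h7 : xv (r • v) = 0 := by
          rw [← h2]
          exact h4
        simp only [LinearMap.smul_apply, LinearMap.zero_apply]
        calc r • xv v = xv (r • v) := (map_smul xv r v).symm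
          _ = 0 := h7
      rw [hx0]
      exact Submodule.zero_mem _
    · -- j = i + 1
      refine ⟨ModuleCat.ofHom (xv ∘ₗ (hseq R r hr i).1.2 : (Fin (nn R i) → R) →ₗ[R] M), ?_⟩
      apply Subtype.ext
      apply ModuleCat.hom_ext
      show (ModuleCat.Hom.hom (SC.f (ModuleCat.ofHom (xv ∘ₗ (hseq R r hr i).1.2 : (Fin (nn R i) → R) →ₗ[R] M))) :
          (Fin (nn R (i + 1)) → R) →ₗ[R] M) = r • xv
      have hfd : (ModuleCat.Hom.hom (SC.f (ModuleCat.ofHom (xv ∘ₗ (hseq R r hr i).1.2 : (Fin (nn R i) → R) →ₗ[R] M))) :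
          (Fin (nn R (i + 1)) → R) →ₗ[R] M)
          = (xv ∘ₗ (hseq R r hr i).1.2) ∘ₗ DD R i :=
        Kd_apply M i _
      rw [hfd]
      refine LinearMap.ext fun v => ?_
      have h2 := LinearMap.congr_fun (hseq_comp R r hr (i + 1)) v
      rw [hseq_succ_q R r hr i] at h2
      simp only [LinearMap.comp_apply, LinearMap.sub_apply, LinearMap.smul_apply,
        LinearMap.id_apply] at h2
      have h3 : (hseq R r hr i).1.2 (DD R i v)
          = r • v - DD R (i + 1) ((hseq R r hr (i + 1)).1.2 v) := by
        rw [h2]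
        abel
      have h6 := LinearMap.congr_fun hc ((hseq R r hr (i + 1)).1.2 v)
      simp only [LinearMap.comp_apply, LinearMap.zero_apply] at h6
      show xv ((hseq R r hr i).1.2 (DD R i v)) = (r • xv) v
      rw [h3, map_sub, map_smul, h6, sub_zero, LinearMap.smul_apply]

end Glue


end Stmt4Aux

/-- Let `(R, m)` be a commutative noetherian local ring and let `S` be a Serre class of
`R`-modules containing a nonzero `R`-module. If `M` is a minimax `R`-module, then
`Ext^j_R(R/m, M) ∈ S` for every integer `j ≥ 0`. -/
theorem stmt4 (R : Type u) [CommRing R] [IsNoetherianRing R] [IsLocalRing R]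
    (S : SerreClass R)
    (hS : ∃ (M : Type u) (_ : AddCommGroup M) (_ : Module R M), Nontrivial M ∧ S.Mem M)
    (M : Type u) [AddCommGroup M] [Module R M] (hM : IsMinimax R M) (j : ℕ) :
    S.Mem ↥(((Ext R (ModuleCat.{u} R) j).obj
      (op (ModuleCat.of R (R ⧸ IsLocalRing.maximalIdeal R)))).obj (ModuleCat.of R M)) := by
  rcases j with _ | jj
  · exact Stmt4Aux.mem_ext S hS M hM 0 0 CochainComplex.prev_nat_zero (Or.inl rfl)
  · exact Stmt4Aux.mem_ext S hS M hM jj (jj + 1)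
      (CochainComplex.prev_nat_succ jj) (Or.inr rfl)
end
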